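/- For every positive integer n, the sum over k from 1 to n of (-1)^k / (k^3 * binom(n,k) * binom(n+k,k)) equals 5 times the sum over k from 1 to n of (-1)^k / (k^3 * binom(2k,k)), plus 2*H_n^{(3)}, where H_n^{(3)} = sum_{j=1}^n 1/j^3. -/

import Mathlib

open Finset Nat

private def Fq (n k : ℕ) : ℚ :=
  (-1 : ℚ) ^ k / ((k : ℚ) ^ 3 * (n.choose k : ℚ) * ((n + k).choose k : ℚ))

private def Gq (n k : ℕ) : ℚ :=
  -2 * (-1 : ℚ) ^ k * ((k ! : ℚ)) ^ 2 * ((n - k - 1)! : ℚ) / ((n : ℚ) ^ 2 * ((n + k)! : ℚ))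

private lemma choose_prod (n k : ℕ) (hkn : k ≤ n) :
    ((n.choose k : ℚ)) * (((n + k).choose k : ℚ)) * ((k ! : ℚ) ^ 2 * ((n - k)! : ℚ))
      = ((n + k)! : ℚ) := by
  have h1 : n.choose k * k ! * (n - k)! = n ! := Nat.choose_mul_factorial_mul_factorial hkn
  have h2 : (n + k).choose k * k ! * (n + k - k)! = (n + k)! :=
    Nat.choose_mul_factorial_mul_factorial (Nat.le_add_left k n)
  have h3 : n + k - k = n := by omega
  rw [h3] at h2
  have : n.choose k * ((n + k).choose k) * (k ! * k ! * (n - k)!) = (n + k)! := by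
    calc n.choose k * ((n + k).choose k) * (k ! * k ! * (n - k)!)
        = (n + k).choose k * k ! * (n.choose k * k ! * (n - k)!) := by ring
      _ = (n + k).choose k * k ! * n ! := by rw [h1]
      _ = (n + k)! := h2
  push_cast [← this]; ring

private lemma F_eq (n k : ℕ) (hk : 1 ≤ k) (hkn : k ≤ n) :
    Fq n k = (-1 : ℚ) ^ k * (k ! : ℚ) ^ 2 * ((n - k)! : ℚ) / ((k : ℚ) ^ 3 * ((n + k)! : ℚ)) := by
  have hc := choose_prod n k hkn
  have h1 : ((n.choose k : ℚ)) ≠ 0 := by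
    exact_mod_cast (Nat.choose_pos hkn).ne'
  have h2 : (((n + k).choose k : ℚ)) ≠ 0 := by
    exact_mod_cast (Nat.choose_pos (Nat.le_add_left k n)).ne'
  have h3 : ((k : ℚ)) ≠ 0 := by exact_mod_cast (by omega : k ≠ 0)
  have h4 : ((k ! : ℚ)) ≠ 0 := by exact_mod_cast (Nat.factorial_pos k).ne'
  have h5 : (((n - k)! : ℚ)) ≠ 0 := by exact_mod_cast (Nat.factorial_pos _).ne'
  have h6 : (((n + k)! : ℚ)) ≠ 0 := by exact_mod_cast (Nat.factorial_pos _).ne'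
  rw [Fq]
  field_simp
  linear_combination -hc

private lemma step (j m : ℕ) :
    Fq (j + 1 + m + 1) (j + 1) - Fq (j + 1 + m) (j + 1)
      = Gq (j + 1 + m + 1) (j + 1) - Gq (j + 1 + m + 1) j := by
  have e1 := F_eq (j + 1 + m + 1) (j + 1) (by omega) (by omega)
  have e2 := F_eq (j + 1 + m) (j + 1) (by omega) (by omega)
  rw [e1, e2, Gq, Gq]
  have s1 : j + 1 + m + 1 - (j + 1) = m + 1 := by omega
  have s2 : j + 1 + m - (j + 1) = m := by omega
  have s3 : m + 1 - 1 = m := by omega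
  have s4 : j + 1 + m + 1 - j - 1 = m + 1 := by omega
  have s5 : j + 1 + m + 1 + (j + 1) = (j + 1 + m + (j + 1)) + 1 := by omega
  have s6 : j + 1 + m + 1 + j = j + 1 + m + (j + 1) := by omega
  rw [s1, s2, s3, s4, s5, s6]
  set d : ℚ := ((j + 1 + m + (j + 1))! : ℚ) with hd
  have hdpos : d ≠ 0 := by rw [hd]; exact_mod_cast (Nat.factorial_pos _).ne'
  have fs : (((j + 1 + m + (j + 1)) + 1)! : ℚ) = ((j + 1 + m + (j + 1) : ℕ) + 1 : ℚ) * d := by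
    rw [Nat.factorial_succ]; push_cast; ring
  have fm : ((m + 1)! : ℚ) = ((m : ℚ) + 1) * (m ! : ℚ) := by
    rw [Nat.factorial_succ]; push_cast; ring
  have fk : ((j + 1)! : ℚ) = ((j : ℚ) + 1) * (j ! : ℚ) := by
    rw [Nat.factorial_succ]; push_cast; ring
  rw [fs, fm, fk]
  have hj : ((j : ℚ) + 1) ≠ 0 := by positivity
  have hm : ((m : ℚ) + 1) ≠ 0 := by positivity
  have hN : ((j + 1 + m + 1 : ℕ) : ℚ) ≠ 0 := by positivity
  have hD : ((j + 1 + m + (j + 1) : ℕ) : ℚ) + 1 ≠ 0 := by positivity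
  have hjf : ((j ! : ℚ)) ≠ 0 := by exact_mod_cast (Nat.factorial_pos _).ne'
  have hmf : ((m ! : ℚ)) ≠ 0 := by exact_mod_cast (Nat.factorial_pos _).ne'
  have hpow : (-1 : ℚ) ^ (j + 1) = -(-1 : ℚ) ^ j := by rw [pow_succ]; ring
  rw [hpow]
  push_cast
  field_simp
  ring

private lemma Gq_zero (n : ℕ) :
    Gq (n + 1) 0 = -2 / ((n : ℚ) + 1) ^ 3 := by
  rw [Gq]
  have h0 : n + 1 - 0 - 1 = n := by omega
  rw [h0]
  have hf : ((n + 1 + 0)! : ℚ) = ((n : ℚ) + 1) * (n ! : ℚ) := by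
    rw [Nat.add_zero, Nat.factorial_succ]; push_cast; ring
  rw [hf]
  have hn : ((n : ℚ) + 1) ≠ 0 := by positivity
  have hnf : ((n ! : ℚ)) ≠ 0 := by exact_mod_cast (Nat.factorial_pos _).ne'
  push_cast
  field_simp
  ring

private lemma final_step (n : ℕ) :
    Fq (n + 1) (n + 1) + (Gq (n + 1) n - Gq (n + 1) 0)
      = 5 * ((-1 : ℚ) ^ (n + 1) / (((n : ℚ) + 1) ^ 3 * ((2 * (n + 1)).choose (n + 1) : ℚ)))
        + 2 * (1 / ((n : ℚ) + 1) ^ 3) := by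
  have e1 := F_eq (n + 1) (n + 1) (by omega) le_rfl
  have s1 : n + 1 - (n + 1) = 0 := by omega
  rw [s1, Nat.factorial_zero] at e1
  rw [e1, Gq_zero, Gq]
  have s2 : n + 1 - n - 1 = 0 := by omega
  rw [s2, Nat.factorial_zero]
  have h4 : ((n + 1 + (n + 1))! : ℚ) = ((n : ℚ) + 1 + (n : ℚ) + 1) * ((n + 1 + n)! : ℚ) := by
    have h5 : n + 1 + (n + 1) = (n + 1 + n) + 1 := by omega
    rw [h5, Nat.factorial_succ]; push_cast; ring
  rw [h4]
  have hch : ((2 * (n + 1)).choose (n + 1)) * (n + 1)! * (n + 1)! = (2 * (n + 1))! := by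
    have h := Nat.choose_mul_factorial_mul_factorial (show n + 1 ≤ 2 * (n + 1) by omega)
    have : 2 * (n + 1) - (n + 1) = n + 1 := by omega
    rwa [this] at h
  have h2f : (2 * (n + 1))! = (2 * (n + 1)) * (n + 1 + n)! := by
    have : 2 * (n + 1) = (n + 1 + n) + 1 := by omega
    rw [this, Nat.factorial_succ]
  rw [h2f] at hch
  have hchq : ((2 * (n + 1)).choose (n + 1) : ℚ) * ((n + 1)! : ℚ) * ((n + 1)! : ℚ)
      = (2 * ((n : ℚ) + 1)) * ((n + 1 + n)! : ℚ) := by exact_mod_cast hch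
  have hfs : ((n + 1)! : ℚ) = ((n : ℚ) + 1) * (n ! : ℚ) := by
    rw [Nat.factorial_succ]; push_cast; ring
  rw [hfs] at hchq
  have hC : (((2 * (n + 1)).choose (n + 1) : ℚ)) ≠ 0 := by
    exact_mod_cast (Nat.choose_pos (show n + 1 ≤ 2 * (n + 1) by omega)).ne'
  have hn : ((n : ℚ) + 1) ≠ 0 := by positivity
  have hnf : ((n ! : ℚ)) ≠ 0 := by exact_mod_cast (Nat.factorial_pos _).ne'
  have hD : (((n + 1 + n)! : ℚ)) ≠ 0 := by exact_mod_cast (Nat.factorial_pos _).ne'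
  have hpow : (-1 : ℚ) ^ (n + 1) = -(-1 : ℚ) ^ n := by rw [pow_succ]; ring
  rw [hfs, hpow]
  push_cast
  field_simp
  linear_combination (-5 * (-1 : ℚ) ^ n) * hchq

/-- Apéry's identity: for every positive integer `n`,
`∑_{k=1}^n (-1)^k / (k^3 * C(n,k) * C(n+k,k))
  = 5 * ∑_{k=1}^n (-1)^k / (k^3 * C(2k,k)) + 2 * H_n^{(3)}`,
where `H_n^{(3)} = ∑_{j=1}^n 1/j^3`. -/
theorem sun_lemma_2_3a (n : ℕ) (hn : 0 < n) :
    (∑ k ∈ Finset.Icc 1 n,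
        (-1 : ℚ) ^ k / ((k : ℚ) ^ 3 * (n.choose k : ℚ) * ((n + k).choose k : ℚ)))
      = 5 * (∑ k ∈ Finset.Icc 1 n, (-1 : ℚ) ^ k / ((k : ℚ) ^ 3 * ((2 * k).choose k : ℚ)))
        + 2 * (∑ j ∈ Finset.Icc 1 n, (1 : ℚ) / (j : ℚ) ^ 3) := by
  induction n with
  | zero => omega
  | succ n ih =>
    rcases Nat.eq_zero_or_pos n with hn0 | hn'
    · subst hn0
      norm_num [Finset.Icc_self]
    · -- inductive step
      have IH := ih hn'
      show (∑ k ∈ Finset.Icc 1 (n + 1), Fq (n + 1) k) = _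
      have hIH : (∑ k ∈ Finset.Icc 1 n, Fq n k)
          = 5 * (∑ k ∈ Finset.Icc 1 n, (-1 : ℚ) ^ k / ((k : ℚ) ^ 3 * ((2 * k).choose k : ℚ)))
            + 2 * (∑ j ∈ Finset.Icc 1 n, (1 : ℚ) / (j : ℚ) ^ 3) := IH
      have htel : ∑ k ∈ Finset.Icc 1 n, (Fq (n + 1) k - Fq n k)
          = Gq (n + 1) n - Gq (n + 1) 0 := by
        rw [← Finset.sum_range_sub (fun i => Gq (n + 1) i) n]
        rw [← Finset.Ico_add_one_right_eq_Icc, Finset.sum_Ico_eq_sum_range]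
        apply Finset.sum_congr rfl
        intro i hi
        rw [Finset.mem_range] at hi
        obtain ⟨m, rfl⟩ : ∃ m, n = i + 1 + m := ⟨n - (i + 1), by omega⟩
        have h1i : 1 + i = i + 1 := by omega
        rw [h1i]
        exact step i m
      have hsum1 : ∑ k ∈ Finset.Icc 1 (n + 1), Fq (n + 1) k
          = (∑ k ∈ Finset.Icc 1 n, Fq (n + 1) k) + Fq (n + 1) (n + 1) := by
        rw [← Finset.sum_Icc_succ_top (by omega : 1 ≤ n + 1)]
      have hsum2 : ∑ k ∈ Finset.Icc 1 n, Fq (n + 1) k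
          = (∑ k ∈ Finset.Icc 1 n, Fq n k) + (Gq (n + 1) n - Gq (n + 1) 0) := by
        rw [← htel, Finset.sum_sub_distrib]; ring
      rw [hsum1, hsum2, hIH,
        Finset.sum_Icc_succ_top (by omega : 1 ≤ n + 1)
          (fun k => (-1 : ℚ) ^ k / ((k : ℚ) ^ 3 * ((2 * k).choose k : ℚ))),
        Finset.sum_Icc_succ_top (by omega : 1 ≤ n + 1)
          (fun j => (1 : ℚ) / (j : ℚ) ^ 3)]
      have hfin := final_step n
      push_cast at hfin ⊢
      linarith [hfin]
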